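/- Let 𝒟 be a stable class of morphisms in a small category ℂ, with associated representable natural transformation π : 𝒟₁ ⟶ 𝒟₀. Then a morphism g : D → C of ℂ lies in 𝒟 if and only if there exist maps x : yC ⟶ 𝒟₀ and η : yD ⟶ 𝒟₁ making the square with top η, left y(g), bottom x, right π a pullback of presheaves. In other words, 𝒟 is exactly the stable class of maps determined by the representable natural transformation π. -/

import Mathlib

open CategoryTheory Category Limits Opposite MonoidalCategory

universe v u

noncomputable section

namespace NatModel

variable {C : Type u} [SmallCategory C]


/-- A class of morphisms is **stable** if in every pullback square whose right-hand vertical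
morphism lies in the class, the left-hand vertical morphism also lies in the class. -/
def StableClass {C : Type u} [Category.{u} C] (D : MorphismProperty C) : Prop :=
  ∀ ⦃P X Y Z : C⦄ (fst : P ⟶ X) (snd : P ⟶ Y) (f : X ⟶ Z) (g : Y ⟶ Z),
    IsPullback fst snd f g → D f → D snd

/-- An element of the presheaf `𝒟₁` at `c`: a pair `(a, d)` with `d ∈ 𝒟` and
`a : c ⟶ dom d`. -/
structure DOneElt (D : MorphismProperty C) (c : C) : Type u where
  {mid : C}
  {tgt : C}
  a : c ⟶ mid
  d : mid ⟶ tgt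
  hd : D d

/-- An element of the presheaf `𝒟₀` at `c`: a pair `(b, d)` with `d ∈ 𝒟` and
`b : c ⟶ cod d`. -/
structure DZeroElt (D : MorphismProperty C) (c : C) : Type u where
  {src : C}
  {tgt : C}
  b : c ⟶ tgt
  d : src ⟶ tgt
  hd : D d

/-- The presheaf `𝒟₁` of "terms" of a class of maps `𝒟`; the action is by precomposition
in the first component. -/
@[simps]
def DOne (D : MorphismProperty C) : Cᵒᵖ ⥤ Type u where
  obj c := DOneElt D c.unop
  map s := TypeCat.ofHom fun e => ⟨s.unop ≫ e.a, e.d, e.hd⟩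
  map_id := by intro c; ext e; cases e; simp
  map_comp := by intro _ _ _ s t; ext e; cases e; simp

/-- The presheaf `𝒟₀` of "types" of a class of maps `𝒟`; the action is by precomposition
in the first component. -/
@[simps]
def DZero (D : MorphismProperty C) : Cᵒᵖ ⥤ Type u where
  obj c := DZeroElt D c.unop
  map s := TypeCat.ofHom fun e => ⟨s.unop ≫ e.b, e.d, e.hd⟩
  map_id := by intro c; ext e; cases e; simp
  map_comp := by intro _ _ _ s t; ext e; cases e; simp

/-- The natural transformation `π : 𝒟₁ ⟶ 𝒟₀`, given by `π (a, d) = (d ∘ a, d)`. -/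
@[simps]
def piD (D : MorphismProperty C) : DOne D ⟶ DZero D where
  app c := TypeCat.ofHom fun e => ⟨e.a ≫ e.d, e.d, e.hd⟩
  naturality := by intro c c' s; ext e; cases e; simp [DZero, DOne]


/-- In the category of types, a pullback square gives unique existence of liftings of
compatible pairs of elements. -/
lemma type_isPullback_existsUnique {P X Y Z : Type u} {fst : P ⟶ X} {snd : P ⟶ Y}
    {f : X ⟶ Z} {g : Y ⟶ Z} (h : IsPullback fst snd f g) {a : X} {b : Y}
    (hab : f a = g b) : ∃! p : P, fst p = a ∧ snd p = b := by
  have hbij := (PullbackCone.isLimitEquivBijective h.cone) h.isLimit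
  obtain ⟨p, hp⟩ := hbij.2 ⟨⟨a, b⟩, hab⟩
  have hfst := congrArg (fun q => q.1.1) hp
  have hsnd := congrArg (fun q => q.1.2) hp
  simp only [PullbackCone.toPullbackObj, IsPullback.cone_fst, IsPullback.cone_snd] at hfst hsnd
  refine ⟨p, ⟨hfst, hsnd⟩, ?_⟩
  intro q ⟨hq1, hq2⟩
  apply hbij.1
  rw [hp]
  apply Subtype.ext
  apply Prod.ext
  · exact hq1
  · exact hq2

/-- For a stable class `𝒟` with associated representable natural
transformation `π : 𝒟₁ ⟶ 𝒟₀`, a morphism `g` lies in `𝒟` if and only if it arises as the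
left-hand vertical map of a presheaf pullback square over `π`; that is, `𝒟` is exactly the
stable class of maps determined by `π`. -/
theorem mem_iff_display (D : MorphismProperty C) (hD : StableClass D)
    {X Y : C} (g : X ⟶ Y) :
    D g ↔ ∃ (x : yoneda.obj Y ⟶ DZero D) (η : yoneda.obj X ⟶ DOne D),
      IsPullback η (yoneda.map g) (piD D) x := by
  constructor
  · intro hg
    refine ⟨⟨fun c => TypeCat.ofHom fun b => ⟨b, g, hg⟩, by intro c c' s; rfl⟩,
      ⟨fun c => TypeCat.ofHom fun a => ⟨a, g, hg⟩, by intro c c' s; rfl⟩, ?_⟩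
    have comm : (⟨fun c => TypeCat.ofHom fun a => (⟨a, g, hg⟩ : DOneElt D c.unop), by intro c c' s; rfl⟩ :
        yoneda.obj X ⟶ DOne D) ≫ piD D =
        yoneda.map g ≫ ⟨fun c => TypeCat.ofHom fun b => (⟨b, g, hg⟩ : DZeroElt D c.unop), by intro c c' s; rfl⟩ := by
      ext c a
      rfl
    apply IsPullback.of_isLimit
      (c := PullbackCone.mk _ _ comm)
    apply evaluationJointlyReflectsLimits
    intro c
    refine (isLimitMapConePullbackConeEquiv ((evaluation _ _).obj c) comm).symm ?_
    refine (PullbackCone.isLimitEquivBijective _).symm ?_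
    constructor
    · intro a a' hh
      have h1 := congrArg (fun q => q.1.1) hh
      simp only [PullbackCone.toPullbackObj] at h1
      injection h1
    · rintro ⟨⟨e, b⟩, he⟩
      obtain ⟨a', d', hd'⟩ := e
      have he' : (⟨a' ≫ d', d', hd'⟩ : DZeroElt D c.unop) = ⟨b, g, hg⟩ := he
      injection he' with hsrc htgt hb hd
      subst hsrc
      subst htgt
      have hd'' : d' = g := eq_of_heq hd
      subst hd''
      have hb' : a' ≫ d' = b := eq_of_heq hb
      refine ⟨a', ?_⟩
      apply Subtype.ext
      apply Prod.ext
      · rfl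
      · exact hb'
  · rintro ⟨x, η, hpb⟩
    rcases hz : x.app (op Y) (𝟙 Y) with ⟨b₀, dz, hdz⟩
    rcases he : η.app (op X) (𝟙 X) with ⟨a₀, de, hde⟩
    -- naturality computations
    have hx : ∀ (c : C) (v : c ⟶ Y), x.app (op c) v = ⟨v ≫ b₀, dz, hdz⟩ := by
      intro c v
      have h := ConcreteCategory.congr_hom (x.naturality v.op) (𝟙 Y)
      simp only [yoneda_obj_map, Quiver.Hom.unop_op, Category.comp_id, types_comp_apply] at h
      rw [hz] at h
      have h' : x.app (op c) (v ≫ 𝟙 Y) = _ := h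
      rw [Category.comp_id] at h'
      exact h'
    have hη : ∀ (c : C) (u : c ⟶ X), η.app (op c) u = ⟨u ≫ a₀, de, hde⟩ := by
      intro c u
      have h := ConcreteCategory.congr_hom (η.naturality u.op) (𝟙 X)
      simp only [yoneda_obj_map, Quiver.Hom.unop_op, Category.comp_id, types_comp_apply] at h
      rw [he] at h
      have h' : η.app (op c) (u ≫ 𝟙 X) = _ := h
      rw [Category.comp_id] at h'
      exact h'
    -- the commutativity at `𝟙 X`
    have hc : (⟨a₀ ≫ de, de, hde⟩ : DZeroElt D X) = ⟨g ≫ b₀, dz, hdz⟩ := by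
      have h := ConcreteCategory.congr_hom (congr_app hpb.w (op X)) (𝟙 X)
      simp only [FunctorToTypes.comp, yoneda_map_app, Category.id_comp] at h
      rw [he] at h
      have h' := h.trans (hx X (𝟙 X ≫ g))
      rw [Category.id_comp] at h'
      exact h'
    injection hc with h1 h2 h3 h4
    subst h1
    subst h2
    have h4' : de = dz := eq_of_heq h4
    subst h4'
    have h3' : a₀ ≫ de = g ≫ b₀ := eq_of_heq h3
    -- the universal property of the candidate pullback square in `C`
    have key : ∀ {W : C} (u : W ⟶ _) (v : W ⟶ Y), u ≫ de = v ≫ b₀ →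
        ∃! p : W ⟶ X, p ≫ a₀ = u ∧ p ≫ g = v := by
      intro W u v huv
      have hT : IsPullback (η.app (op W)) ((yoneda.map g).app (op W))
          ((piD D).app (op W)) (x.app (op W)) :=
        hpb.map ((evaluation Cᵒᵖ (Type u)).obj (op W))
      have hcomp : (piD D).app (op W) ⟨u, de, hde⟩ = x.app (op W) v := by
        rw [hx W v]
        show (⟨u ≫ de, de, hde⟩ : DZeroElt D W) = _
        rw [huv]
      obtain ⟨p, ⟨hp1, hp2⟩, hpu⟩ := type_isPullback_existsUnique hT hcomp
      have hp1' : p ≫ a₀ = u := by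
        rw [hη W p] at hp1
        injection hp1
      have hp2' : p ≫ g = v := by simpa using hp2
      refine ⟨p, ⟨hp1', hp2'⟩, ?_⟩
      intro m ⟨hm1, hm2⟩
      apply hpu
      constructor
      · rw [hη W m, hm1]
      · simpa using hm2
    have hPB : IsPullback a₀ g de b₀ := by
      apply IsPullback.of_isLimit
        (c := PullbackCone.mk a₀ g h3')
      exact PullbackCone.IsLimit.mk h3'
        (fun s => (key s.fst s.snd s.condition).choose)
        (fun s => (key s.fst s.snd s.condition).choose_spec.1.1)
        (fun s => (key s.fst s.snd s.condition).choose_spec.1.2)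
        (fun s m hm1 hm2 => (key s.fst s.snd s.condition).choose_spec.2 m ⟨hm1, hm2⟩)
    exact hD a₀ g de b₀ hPB hde

end NatModel

end
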